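/- Let (S, ·) be an adequate partial semigroup, let 𝓕 be an adequately partition regular invariant family of finite subsets of S, and let A ⊂ S be piecewise syndetic. Then there exists F ∈ 𝓕 with F ⊂ A. -/

import Mathlib

open Set

/-- A partial semigroup: a partially defined associative operation, encoded with
`Option`. Associativity: if either side of `x·(y·z) = (x·y)·z` is defined, so is
the other and they agree. -/
structure PartialSemigroup (S : Type*) where
  op : S → S → Option S
  assoc : ∀ x y z : S,
    (op x y).bind (fun w => op w z) = (op y z).bind (fun w => op x w)

namespace PartialSemigroup

variable {S : Type*} (P : PartialSemigroup S)

/-- `φ(x) = {y : x·y is defined}`. -/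
def phi (x : S) : Set S := {y | (P.op x y).isSome}

/-- `S` is adequate if `⋂_{x ∈ F} φ(x) ≠ ∅` for every finite nonempty `F`. -/
def Adequate : Prop :=
  ∀ F : Finset S, F.Nonempty → (⋂ x ∈ F, P.phi x).Nonempty

/-- `x⁻¹A = {y ∈ φ(x) : x·y ∈ A}`. -/
def invImg (x : S) (A : Set S) : Set S := {y | ∃ z ∈ A, P.op x y = some z}

/-- The sets of the ultrafilter product `p·q = {A : {x : x⁻¹A ∈ q} ∈ p}`. -/
def mulSets (p q : Ultrafilter S) : Set (Set S) :=
  {A | {x | P.invImg x A ∈ q} ∈ p}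

/-- `δS ⊆ βS`: ultrafilters containing every `φ(x)`. -/
def delta : Set (Ultrafilter S) := {p | ∀ x : S, P.phi x ∈ p}

/-- `r` is the product `p·q` in `δS`. -/
def IsProd (p q r : Ultrafilter S) : Prop := ∀ A : Set S, A ∈ r ↔ A ∈ P.mulSets p q

/-- A two-sided ideal of the compact right topological semigroup `δS`. -/
def IsIdeal (I : Set (Ultrafilter S)) : Prop :=
  I ⊆ P.delta ∧ I.Nonempty ∧
    (∀ p ∈ P.delta, ∀ q ∈ I, ∀ r : Ultrafilter S, P.IsProd p q r → r ∈ I) ∧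
    (∀ p ∈ P.delta, ∀ q ∈ I, ∀ r : Ultrafilter S, P.IsProd q p r → r ∈ I)

/-- Membership in the smallest two-sided ideal `K(δS)` (which equals the
intersection of all two-sided ideals). -/
def InSmallestIdeal (p : Ultrafilter S) : Prop :=
  p ∈ P.delta ∧ ∀ I : Set (Ultrafilter S), P.IsIdeal I → p ∈ I

/-- `A` is piecewise syndetic: `A` belongs to some ultrafilter in `K(δS)`. -/
def PiecewiseSyndetic (A : Set S) : Prop :=
  ∃ p : Ultrafilter S, P.InSmallestIdeal p ∧ A ∈ p

/-- `𝓕` is invariant under all defined left and right translations. -/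
def Invariant (𝓕 : Set (Set S)) : Prop :=
  (∀ s : S, ∀ F ∈ 𝓕, (∀ f ∈ F, (P.op s f).isSome) →
      {z | ∃ f ∈ F, P.op s f = some z} ∈ 𝓕) ∧
  (∀ s : S, ∀ F ∈ 𝓕, (∀ f ∈ F, (P.op f s).isSome) →
      {z | ∃ f ∈ F, P.op f s = some z} ∈ 𝓕)

/-- `𝓕` is adequately partition regular: every finite partition (colouring) of
any set `⋂_{x ∈ G} φ(x)` (`G` finite) has a cell containing a member of `𝓕`. -/
def AdequatelyPartitionRegular (𝓕 : Set (Set S)) : Prop :=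
  ∀ G : Finset S, ∀ (r : ℕ) (c : S → Fin r),
    ∃ F ∈ 𝓕, F ⊆ (⋂ x ∈ G, P.phi x) ∧ ∃ i : Fin r, ∀ y ∈ F, c y = i

/-- The product of two elements of `δS` is again in `δS`. -/
theorem prod_mem_delta {p q r : Ultrafilter S} (hp : p ∈ P.delta) (hq : q ∈ P.delta)
    (hr : P.IsProd p q r) : r ∈ P.delta := by
  intro x₀
  rw [hr]
  show {x | P.invImg x (P.phi x₀) ∈ q} ∈ p
  refine Filter.mem_of_superset (hp x₀) ?_
  intro x hx
  obtain ⟨w, hw⟩ := Option.isSome_iff_exists.mp hx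
  refine Filter.mem_of_superset (hq w) ?_
  intro y hy
  obtain ⟨u, hu⟩ := Option.isSome_iff_exists.mp hy
  have hassoc := P.assoc x₀ x y
  rw [hw] at hassoc
  rw [Option.bind_some] at hassoc
  rw [hu] at hassoc
  obtain ⟨v, hv1, hv2⟩ := Option.bind_eq_some_iff.mp hassoc.symm
  exact ⟨v, Option.isSome_iff_exists.mpr ⟨u, hv2⟩, hv1⟩

/-- Key colouring lemma: a member of `𝓕` inside `⋂_{x∈G} φ(x)` avoiding
finitely many `𝓕`-free sets. -/
theorem exists_mem_avoiding {𝓕 : Set (Set S)} (hpr : P.AdequatelyPartitionRegular 𝓕)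
    (G : Finset S) (l : List (Set S)) (hl : ∀ C ∈ l, ¬∃ F ∈ 𝓕, F ⊆ C) :
    ∃ F ∈ 𝓕, F ⊆ (⋂ x ∈ G, P.phi x) ∧ ∀ C ∈ l, ∀ y ∈ F, y ∉ C := by
  classical
  set n := l.length with hn
  set c : S → Fin (n + 1) := fun y =>
    if h : ∃ j : Fin n, y ∈ l.get j then (Classical.choose h).castSucc
    else Fin.last n with hc
  obtain ⟨F, hF, hFsub, i, hi⟩ := hpr G (n + 1) c
  refine ⟨F, hF, hFsub, ?_⟩
  by_cases hex : ∃ y ∈ F, ∃ j : Fin n, y ∈ l.get j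
  · exfalso
    obtain ⟨y₁, hy₁, hj⟩ := hex
    set j₀ := Classical.choose hj with hj₀
    have hy₁c : c y₁ = j₀.castSucc := by rw [hc]; simp only [dif_pos hj]; rfl
    have hij : i = j₀.castSucc := (hi y₁ hy₁).symm.trans hy₁c
    have hsub : F ⊆ l.get j₀ := by
      intro y hy
      have hcy := hi y hy
      by_cases h : ∃ j : Fin n, y ∈ l.get j
      · have h1 : c y = (Classical.choose h).castSucc := by rw [hc]; simp only [dif_pos h]
        have h2 : (Classical.choose h).castSucc = j₀.castSucc := by
          rw [← h1, hcy, hij]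
        have h3 := Fin.castSucc_injective _ h2
        rw [← h3]
        exact Classical.choose_spec h
      · have h1 : c y = Fin.last n := by rw [hc]; simp only [dif_neg h]
        rw [hcy, hij] at h1
        exact absurd h1 (Fin.castSucc_lt_last j₀).ne
    exact hl (l.get j₀) (l.get_mem j₀) ⟨F, hF, hsub⟩
  · intro C hC y hy hyC
    obtain ⟨j, hj⟩ := List.mem_iff_get.mp hC
    exact hex ⟨y, hy, j, by rw [hj]; exact hyC⟩

end PartialSemigroup

/-- Lemma 3.1: in an adequate partial semigroup, every piecewise syndetic set
contains a member of any adequately partition regular invariant family of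
finite subsets. -/
theorem piecewise_syndetic_contains_member {S : Type*} (P : PartialSemigroup S)
    (hAd : P.Adequate) (𝓕 : Set (Set S)) (hfin : ∀ F ∈ 𝓕, F.Finite)
    (hinv : P.Invariant 𝓕) (hpr : P.AdequatelyPartitionRegular 𝓕)
    (A : Set S) (hA : P.PiecewiseSyndetic A) :
    ∃ F ∈ 𝓕, F ⊆ A := by
  classical
  by_cases hempty : (∅ : Set S) ∈ 𝓕
  · exact ⟨∅, hempty, empty_subset A⟩
  have hne : ∀ F ∈ 𝓕, F.Nonempty := by
    intro F hF
    rcases Set.eq_empty_or_nonempty F with h | h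
    · exact absurd (h ▸ hF) hempty
    · exact h
  obtain ⟨F₀, hF₀, -⟩ := hpr ∅ 1 (fun _ => 0)
  obtain ⟨y₀, -⟩ := hne F₀ hF₀
  haveI : Nonempty S := ⟨y₀⟩
  -- the generating family for the witness ultrafilter
  set g : Set (Set S) := Set.range P.phi ∪ {B | ¬∃ F ∈ 𝓕, F ⊆ Bᶜ} with hg
  have hNB : (Filter.generate g).NeBot := by
    rw [Filter.generate_neBot_iff]
    intro t htg htfin
    set f : Set S → S := fun u => if h : ∃ x, P.phi x = u then h.choose else Classical.ofNonempty
      with hf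
    set G : Finset S := (htfin.toFinset.filter (fun u => ∃ x, P.phi x = u)).image f with hG
    set l : List (Set S) :=
      ((htfin.toFinset.filter (fun u => ¬∃ x, P.phi x = u)).image compl).toList with hldef
    have hl : ∀ C ∈ l, ¬∃ F ∈ 𝓕, F ⊆ C := by
      intro C hC
      rw [hldef, Finset.mem_toList, Finset.mem_image] at hC
      obtain ⟨u, hu, rfl⟩ := hC
      rw [Finset.mem_filter, Set.Finite.mem_toFinset] at hu
      obtain ⟨hut, hun⟩ := hu
      rcases htg hut with hr | hfree
      · exact absurd hr hun
      · intro ⟨F, hF, hFs⟩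
        exact hfree ⟨F, hF, (compl_compl u).symm ▸ hFs⟩
    obtain ⟨F, hF, hFsub, hFd⟩ := P.exists_mem_avoiding hpr G l hl
    obtain ⟨y, hy⟩ := hne F hF
    refine ⟨y, ?_⟩
    rw [Set.mem_sInter]
    intro u hut
    by_cases hrange : ∃ x, P.phi x = u
    · have hfu : P.phi (f u) = u := by
        rw [hf]; simp only [dif_pos hrange]; exact hrange.choose_spec
      have hGmem : f u ∈ G := by
        rw [hG]
        exact Finset.mem_image.mpr
          ⟨u, Finset.mem_filter.mpr ⟨htfin.mem_toFinset.mpr hut, hrange⟩, rfl⟩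
      have := hFsub hy
      rw [Set.mem_iInter₂] at this
      rw [← hfu]
      exact this (f u) hGmem
    · have hul : uᶜ ∈ l := by
        rw [hldef, Finset.mem_toList, Finset.mem_image]
        exact ⟨u, Finset.mem_filter.mpr ⟨htfin.mem_toFinset.mpr hut, hrange⟩, rfl⟩
      have := hFd uᶜ hul y hy
      simpa using this
  obtain ⟨q, hq⟩ := Ultrafilter.exists_le (Filter.generate g)
  have hqδ : q ∈ P.delta := fun x =>
    hq (Filter.mem_generate_of_mem (Or.inl ⟨x, rfl⟩))
  have hqI : ∀ B ∈ q, ∃ F ∈ 𝓕, F ⊆ B := by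
    intro B hB
    by_contra hcon
    have : Bᶜ ∈ q := by
      refine hq (Filter.mem_generate_of_mem (Or.inr ?_))
      show ¬∃ F ∈ 𝓕, F ⊆ Bᶜᶜ
      rw [compl_compl]
      exact hcon
    exact q.empty_notMem (by simpa using q.inter_mem hB this)
  -- the ideal
  set I : Set (Ultrafilter S) := {r | r ∈ P.delta ∧ ∀ B ∈ r, ∃ F ∈ 𝓕, F ⊆ B} with hIdef
  have hI : P.IsIdeal I := by
    refine ⟨fun r hr => hr.1, ⟨q, hqδ, hqI⟩, ?_, ?_⟩
    · -- left translate
      intro p hp q' hq' r hr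
      refine ⟨P.prod_mem_delta hp hq'.1 hr, ?_⟩
      intro B hB
      have hB' : {x | P.invImg x B ∈ q'} ∈ p := (hr B).mp hB
      obtain ⟨x, hx⟩ := Ultrafilter.nonempty_of_mem hB'
      obtain ⟨F, hF, hFs⟩ := hq'.2 _ hx
      have hdef : ∀ f ∈ F, (P.op x f).isSome := by
        intro f hf
        obtain ⟨z, _, hz⟩ := hFs hf
        exact Option.isSome_iff_exists.mpr ⟨z, hz⟩
      refine ⟨_, hinv.1 x F hF hdef, ?_⟩
      rintro z ⟨f, hf, hfz⟩
      obtain ⟨z', hz', hzz'⟩ := hFs hf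
      rw [hfz] at hzz'
      exact (Option.some_injective _ hzz').symm ▸ hz'
    · -- right translate
      intro p hp q' hq' r hr
      refine ⟨P.prod_mem_delta hq'.1 hp hr, ?_⟩
      intro B hB
      have hB' : {x | P.invImg x B ∈ p} ∈ q' := (hr B).mp hB
      obtain ⟨F, hF, hFs⟩ := hq'.2 _ hB'
      have hint : (⋂ f ∈ F, P.invImg f B) ∈ p :=
        (Filter.biInter_mem (hfin F hF)).mpr fun f hf => hFs hf
      obtain ⟨s, hs⟩ := Ultrafilter.nonempty_of_mem hint
      rw [Set.mem_iInter₂] at hs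
      have hdef : ∀ f ∈ F, (P.op f s).isSome := by
        intro f hf
        obtain ⟨z, _, hz⟩ := hs f hf
        exact Option.isSome_iff_exists.mpr ⟨z, hz⟩
      refine ⟨_, hinv.2 s F hF hdef, ?_⟩
      rintro z ⟨f, hf, hfz⟩
      obtain ⟨z', hz', hzz'⟩ := hs f hf
      rw [hfz] at hzz'
      exact (Option.some_injective _ hzz').symm ▸ hz'
  obtain ⟨p, ⟨hpδ, hpK⟩, hpA⟩ := hA
  exact (hpK I hI).2 A hpA
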